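/- Reduction from strict codirect solutions to the intersection of a regular relation with the subsequence relation: let σ, σ' : A → Option B be alphabetic morphisms and M : NFA A Q a Mathlib NFA. Define a binary relation R on List (Option B) by: (u, v) ∈ R iff there exist w ∈ M.accepts, lists us, us' : List (List (Option B)) with us.length = us'.length = w.length, and r : ℕ, such that for every i < w.length: (us.get i).filterMap id = (σ (w.get i)).toList, (us'.get i).filterMap id = (σ' (w.get i)).toList, and (us.get i).length = (us'.get i).length; and u = us.flatten and v = us'.flatten ++ List.replicate r none. Then: (a) if (u, v) ∈ R and u is a sublist (List.Sublist) of v, then there exists w ∈ M.accepts with w.filterMap σ a sublist of w.filterMap σ'; (b) if M has a strict codirect solution with respect to (σ, σ'), then there exists (u, v) ∈ R with u a sublist of v. -/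

import Mathlib

/-- `w` is a strict codirect solution with respect to the alphabetic morphisms
`σ, σ' : A → Option B`, witnessed by `vs`. -/
def AlphStrictCodirectWitness {A B : Type*} (σ σ' : A → Option B)
    (w : List A) (vs : List (List B)) : Prop :=
  ∃ h : vs.length = w.length,
    (∀ k, ∀ hk : k < w.length,
      (vs.get ⟨k, by omega⟩).Sublist (σ' (w.get ⟨k, hk⟩)).toList) ∧
    w.filterMap σ = vs.flatten ∧
    (∀ k ≤ w.length, ((vs.take k).flatten).length ≤ ((w.take k).filterMap σ).length) ∧
    ∀ k, 1 ≤ k → k < w.length →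
      ((vs.take k).flatten).length < ((w.take k).filterMap σ).length

private def chainL {B : Type*} : List B → List ℕ → List (Option B)
  | [], _ => []
  | _ :: _, [] => []
  | x :: P, c :: γ => some x :: (List.replicate c none ++ chainL P γ)

private lemma chainL_nil {B : Type*} (γ : List ℕ) : chainL ([] : List B) γ = [] := by
  cases γ <;> rfl

private lemma chainL_cons {B : Type*} (x : B) (P : List B) (c : ℕ) (γ : List ℕ) :
    chainL (x :: P) (c :: γ) = some x :: (List.replicate c none ++ chainL P γ) := rfl

private lemma chainL_append_singleton {B : Type*} :
    ∀ (P : List B) (γ : List ℕ), γ.length = P.length → ∀ (y : B) (c : ℕ),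
      chainL (P ++ [y]) (γ ++ [c]) = chainL P γ ++ (some y :: List.replicate c none) := by
  intro P
  induction P with
  | nil => intro γ h y c; cases γ with
    | nil => simp [chainL_nil, chainL_cons]
    | cons => simp at h
  | cons x P ih =>
    intro γ h y c
    cases γ with
    | nil => simp at h
    | cons c₀ γt =>
      simp only [List.cons_append, chainL_cons]
      rw [ih γt (by simpa using h) y c, List.append_assoc]

private lemma chainL_bump {B : Type*} :
    ∀ (P : List B) (γ : List ℕ) (a : ℕ), P ≠ [] → γ.length = P.length →
      ∃ γ' : List ℕ, γ'.length = P.length ∧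
        chainL P γ' = chainL P γ ++ List.replicate a none := by
  intro P
  induction P with
  | nil => simp
  | cons x P ih =>
    intro γ a _ hlen
    cases γ with
    | nil => simp at hlen
    | cons c γt =>
      cases P with
      | nil =>
        cases γt with
        | nil =>
          refine ⟨[c + a], rfl, ?_⟩
          rw [chainL_cons, chainL_cons, chainL_nil ([] : List ℕ), List.append_nil,
            List.append_nil, List.replicate_add]
          simp
        | cons => simp at hlen
      | cons x₂ P₂ =>
        obtain ⟨γ', hl, he⟩ := ih γt a (by simp) (by simpa using hlen)
        exact ⟨c :: γ', by simp [hl], by simp [chainL_cons, he, List.append_assoc]⟩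

private lemma filterMap_id_replicate_none {B : Type*} (c : ℕ) :
    (List.replicate c (none : Option B)).filterMap id = [] := by
  induction c with
  | zero => rfl
  | succ n ih => simp [List.replicate_succ, ih]

private lemma filterMap_singleton' {A B : Type*} (σ : A → Option B) (a : A) :
    List.filterMap σ [a] = (σ a).toList := by
  cases h : σ a <;> simp [List.filterMap_cons, h]

private lemma key_construction {A B : Type*} (σ σ' : A → Option B) (w : List A)
    (vs : List (List B)) (hwit : AlphStrictCodirectWitness σ σ' w vs) :
    ∃ us us' : List (List (Option B)), ∃ r : ℕ,
      us.length = w.length ∧ us'.length = w.length ∧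
      (∀ i (hi1 : i < us.length) (hi2 : i < us'.length) (hi3 : i < w.length),
        (us[i]).filterMap id = (σ (w[i]'hi3)).toList ∧
        (us'[i]).filterMap id = (σ' (w[i]'hi3)).toList ∧
        (us[i]).length = (us'[i]).length) ∧
      us.flatten.Sublist (us'.flatten ++ List.replicate r (none : Option B)) := by
  obtain ⟨hlv, hsub', hflat, h3, h4⟩ := hwit
  have hpref : ∀ j, j ≤ w.length →
      ∃ Pj : List B, (vs.take j).flatten ++ Pj = (w.take j).filterMap σ := by
    intro j hj
    have h1 : (vs.take j).flatten <+: vs.flatten :=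
      ⟨(vs.drop j).flatten, by rw [← List.flatten_append, List.take_append_drop]⟩
    have h2 : (w.take j).filterMap σ <+: vs.flatten := by
      rw [← hflat]
      exact ⟨(w.drop j).filterMap σ, by rw [← List.filterMap_append, List.take_append_drop]⟩
    exact List.prefix_of_prefix_length_le h1 h2 (h3 j hj)
  have main : ∀ k, k ≤ w.length →
      ∃ us us' : List (List (Option B)), ∃ γ : List ℕ, ∃ ε : ℕ, ∃ P : List B,
        us.length = k ∧ us'.length = k ∧
        (∀ i (hi1 : i < us.length) (hi2 : i < us'.length) (hi3 : i < w.length),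
          (us[i]).filterMap id = (σ (w[i]'hi3)).toList ∧
          (us'[i]).filterMap id = (σ' (w[i]'hi3)).toList ∧
          (us[i]).length = (us'[i]).length) ∧
        γ.length = P.length ∧
        (vs.take k).flatten ++ P = (w.take k).filterMap σ ∧
        (k < w.length → ε = 0) ∧
        us.flatten.Sublist (us'.flatten ++ chainL P γ ++ List.replicate ε none) := by
    intro k
    induction k with
    | zero =>
      intro _
      exact ⟨[], [], [], 0, [], rfl, rfl, by intro i hi1; simp at hi1, rfl, by simp,
        fun _ => rfl, by simp [chainL_nil]⟩
    | succ k ih =>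
      intro hk1
      have hkn : k < w.length := hk1
      obtain ⟨us, us', γ, ε, P, hlen, hlen', hblocks, hγlen, hPeq, hε, hsubl⟩ :=
        ih (Nat.le_of_lt hkn)
      have hε0 : ε = 0 := hε hkn
      subst hε0
      rw [List.replicate_zero, List.append_nil] at hsubl
      obtain ⟨P', hPeq'⟩ := hpref (k + 1) hk1
      have hkv : k < vs.length := by omega
      have hvtake : (vs.take (k + 1)).flatten = (vs.take k).flatten ++ vs[k] := by
        have h5 : vs.take (k + 1) = vs.take k ++ [vs[k]] := by
          rw [List.take_succ, List.getElem?_eq_getElem hkv]; rfl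
        rw [h5, List.flatten_append]
        simp
      have hwtake : (w.take (k + 1)).filterMap σ
          = (w.take k).filterMap σ ++ (σ (w[k]'hkn)).toList := by
        rw [List.take_succ, List.getElem?_eq_getElem hkn, List.filterMap_append]
        simp [filterMap_singleton']
      have rel : vs[k] ++ P' = P ++ (σ (w[k]'hkn)).toList := by
        apply List.append_cancel_left (as := (vs.take k).flatten)
        rw [← List.append_assoc, ← hvtake, hPeq', hwtake, ← hPeq, List.append_assoc]
      have hstrict : k + 1 < w.length → P' ≠ [] := by
        intro hlt hP'
        have h4' := h4 (k + 1) (by omega) hlt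
        rw [hP', List.append_nil] at hPeq'
        rw [hPeq'] at h4'
        exact lt_irrefl _ h4'
      have step : ∀ (U V : List (Option B)) (γ' : List ℕ) (ε' : ℕ),
          U.filterMap id = (σ (w[k]'hkn)).toList →
          V.filterMap id = (σ' (w[k]'hkn)).toList →
          U.length = V.length → γ'.length = P'.length → (k + 1 < w.length → ε' = 0) →
          (chainL P γ ++ U).Sublist (V ++ (chainL P' γ' ++ List.replicate ε' none)) →
          ∃ us us' : List (List (Option B)), ∃ γ : List ℕ, ∃ ε : ℕ, ∃ P : List B,
            us.length = k + 1 ∧ us'.length = k + 1 ∧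
            (∀ i (hi1 : i < us.length) (hi2 : i < us'.length) (hi3 : i < w.length),
              (us[i]).filterMap id = (σ (w[i]'hi3)).toList ∧
              (us'[i]).filterMap id = (σ' (w[i]'hi3)).toList ∧
              (us[i]).length = (us'[i]).length) ∧
            γ.length = P.length ∧
            (vs.take (k + 1)).flatten ++ P = (w.take (k + 1)).filterMap σ ∧
            (k + 1 < w.length → ε = 0) ∧
            us.flatten.Sublist (us'.flatten ++ chainL P γ ++ List.replicate ε none) := by
        intro U V γ' ε' hU hV hUV hγ' hε' hcore
        refine ⟨us ++ [U], us' ++ [V], γ', ε', P', by simp [hlen], by simp [hlen'],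
          ?_, hγ', hPeq', hε', ?_⟩
        · intro i hi1 hi2 hi3
          simp only [List.length_append, List.length_singleton] at hi1 hi2
          by_cases hik : i < k
          · have e1 : (us ++ [U])[i]'(by simp; omega) = us[i]'(by omega) :=
              List.getElem_append_left (by omega)
            have e2 : (us' ++ [V])[i]'(by simp; omega) = us'[i]'(by omega) :=
              List.getElem_append_left (by omega)
            rw [e1, e2]
            exact hblocks i (by omega) (by omega) hi3
          · have hik' : i = k := by omega
            subst hik'
            have e1 : (us ++ [U])[i]'(by simp; omega) = U := by
              rw [List.getElem_append_right (by omega)]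
              simp [hlen]
            have e2 : (us' ++ [V])[i]'(by simp; omega) = V := by
              rw [List.getElem_append_right (by omega)]
              simp [hlen']
            rw [e1, e2]
            exact ⟨hU, hV, hUV⟩
        · rw [List.flatten_append, List.flatten_append]
          simp only [List.flatten_cons, List.flatten_nil, List.append_nil]
          have s1 : (us.flatten ++ U).Sublist ((us'.flatten ++ chainL P γ) ++ U) :=
            hsubl.append (List.Sublist.refl U)
          rw [List.append_assoc] at s1
          have s3 := hcore.append_left us'.flatten
          exact s1.trans (by simpa [List.append_assoc] using s3)
      have hvsk_sub : (vs[k]'hkv).Sublist (σ' (w[k]'hkn)).toList := by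
        have := hsub' k hkn
        simpa [List.get_eq_getElem] using this
      rcases hveq : vs[k]'hkv with _ | ⟨x, t⟩
      · -- vs[k] = []
        rw [hveq, List.nil_append] at rel
        cases hσk : σ (w[k]'hkn) with
        | none =>
          rw [hσk] at rel
          simp only [Option.toList_none, List.append_nil] at rel
          cases hσ'k : σ' (w[k]'hkn) with
          | none =>
            apply step [] [] γ 0
            · simp [hσk]
            · simp [hσ'k]
            · rfl
            · rw [rel]; exact hγlen
            · intro _; rfl
            · rw [rel]; simp
          | some y =>
            rcases hPc : P with _ | ⟨p₀, Pt⟩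
            · -- P = []
              apply step [none] [some y] [] 1
              · simp [hσk]
              · simp [hσ'k]
              · rfl
              · simp [rel, hPc]
              · intro hlt; exact absurd (by rw [rel, hPc]) (hstrict hlt)
              · rw [rel, hPc]
                simp only [chainL_nil, List.nil_append, List.append_nil]
                exact List.Sublist.cons _ (List.Sublist.refl _)
            · -- P ≠ []
              obtain ⟨γ2, hγ2l, hγ2e⟩ := chainL_bump P γ 1 (by rw [hPc]; simp) hγlen
              apply step [none] [some y] γ2 0
              · simp [hσk]
              · simp [hσ'k]
              · rfl
              · rw [rel]; exact hγ2l
              · intro _; rfl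
              · rw [rel, hγ2e]
                simp only [List.replicate_one, List.append_nil, List.replicate_zero]
                exact List.Sublist.cons _ (List.Sublist.refl _)
        | some y =>
          rw [hσk] at rel
          simp only [Option.toList_some] at rel
          cases hσ'k : σ' (w[k]'hkn) with
          | none =>
            apply step [some y] [none] (γ ++ [0]) 0
            · simp [hσk, List.filterMap_cons]
            · simp [hσ'k]
            · rfl
            · simp [rel, hγlen]
            · intro _; rfl
            · rw [rel, chainL_append_singleton P γ hγlen y 0]
              simp only [List.replicate_zero, List.append_nil, List.replicate_zero]
              exact List.Sublist.cons _ (by simp)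
          | some y' =>
            apply step [some y] [some y'] (γ ++ [0]) 0
            · simp [hσk, List.filterMap_cons]
            · simp [hσ'k, List.filterMap_cons]
            · rfl
            · simp [rel, hγlen]
            · intro _; rfl
            · rw [rel, chainL_append_singleton P γ hγlen y 0]
              simp only [List.replicate_zero, List.append_nil]
              exact List.Sublist.cons _ (by simp)
      · -- vs[k] = x :: t
        have hforced : σ' (w[k]'hkn) = some x ∧ t = [] := by
          rw [hveq] at hvsk_sub
          cases hσ'k : σ' (w[k]'hkn) with
          | none => rw [hσ'k] at hvsk_sub; simp at hvsk_sub
          | some y =>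
            rw [hσ'k] at hvsk_sub
            simp only [Option.toList_some] at hvsk_sub
            rw [List.sublist_singleton] at hvsk_sub
            rcases hvsk_sub with h | h
            · simp at h
            · injection h with h1 h2
              exact ⟨by rw [h1], h2⟩
        obtain ⟨hσ'k, ht⟩ := hforced
        subst ht
        rw [hveq] at rel
        simp only [List.cons_append, List.nil_append] at rel
        -- rel : x :: P' = P ++ (σ w[k]).toList
        rcases P with _ | ⟨x₂, Q⟩
        · -- P = []
          cases hσk : σ (w[k]'hkn) with
          | none => rw [hσk] at rel; simp at rel
          | some y =>
            rw [hσk] at rel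
            simp only [Option.toList_some, List.nil_append] at rel
            injection rel with hxy hP'
            apply step [some y] [some x] [] 0
            · simp [hσk, List.filterMap_cons]
            · simp [hσ'k, List.filterMap_cons]
            · rfl
            · simp [hP']
            · intro _; rfl
            · rw [hP', hxy]
              simp only [chainL_nil, List.nil_append, List.append_nil, List.replicate_zero]
              exact List.Sublist.refl _
        · -- P = x₂ :: Q
          simp only [List.cons_append] at rel
          injection rel with hx₂ hP'
          -- hx₂ : x = x₂, hP' : P' = Q ++ (σ w[k]).toList
          rcases γ with _ | ⟨c₀, γt⟩
          · simp at hγlen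
          · have hγtlen : γt.length = Q.length := by simpa using hγlen
            cases hσk : σ (w[k]'hkn) with
            | some y =>
              rw [hσk] at hP'
              simp only [Option.toList_some] at hP'
              apply step (some y :: List.replicate c₀ none) (some x :: List.replicate c₀ none)
                (γt ++ [c₀]) 0
              · simp [hσk, List.filterMap_cons, filterMap_id_replicate_none]
              · simp [hσ'k, List.filterMap_cons, filterMap_id_replicate_none]
              · simp
              · simp [hP', hγtlen]
              · intro _; rfl
              · have hEq : chainL (x₂ :: Q) (c₀ :: γt) ++ (some y :: List.replicate c₀ none)
                    = (some x :: List.replicate c₀ none)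
                      ++ (chainL P' (γt ++ [c₀]) ++ List.replicate 0 none) := by
                  rw [hP', chainL_append_singleton Q γt hγtlen y c₀, chainL_cons, ← hx₂]
                  simp [List.append_assoc]
                rw [hEq]
            | none =>
              rw [hσk] at hP'
              simp only [Option.toList_none, List.append_nil] at hP'
              -- hP' : P' = Q
              rcases Q with _ | ⟨q₀, Qt⟩
              · -- Q = [], P' = []
                have hγt : γt = [] := by simpa using hγtlen
                subst hγt
                apply step (List.replicate (c₀ + 1) none) (some x :: List.replicate c₀ none)
                  [] (c₀ + 1)
                · simp [hσk, filterMap_id_replicate_none]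
                · simp [hσ'k, List.filterMap_cons, filterMap_id_replicate_none]
                · simp
                · simp [hP']
                · intro hlt; exact absurd hP' (hstrict hlt)
                · have hEq : chainL [x₂] [c₀] ++ List.replicate (c₀ + 1) none
                      = (some x :: List.replicate c₀ none)
                        ++ (chainL P' [] ++ List.replicate (c₀ + 1) none) := by
                    rw [hP', chainL_cons, chainL_nil ([] : List ℕ), ← hx₂]
                    simp
                  rw [hEq]
              · obtain ⟨γ2, hγ2l, hγ2e⟩ := chainL_bump (q₀ :: Qt) γt (c₀ + 1) (by simp) hγtlen
                apply step (List.replicate (c₀ + 1) none) (some x :: List.replicate c₀ none) γ2 0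
                · simp [hσk, filterMap_id_replicate_none]
                · simp [hσ'k, List.filterMap_cons, filterMap_id_replicate_none]
                · simp
                · rw [hP']; exact hγ2l
                · intro _; rfl
                · have hEq : chainL (x₂ :: q₀ :: Qt) (c₀ :: γt) ++ List.replicate (c₀ + 1) none
                      = (some x :: List.replicate c₀ none)
                        ++ (chainL P' γ2 ++ List.replicate 0 none) := by
                    rw [hP', hγ2e, chainL_cons, ← hx₂]
                    simp [List.append_assoc]
                  rw [hEq]
  obtain ⟨us, us', γ, ε, P, hlen, hlen', hblocks, hγlen, hPeq, _, hsubl⟩ :=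
    main w.length (le_refl _)
  have hPnil : P = [] := by
    have hvt : vs.take w.length = vs := by rw [← hlv]; exact List.take_length
    have hwt : w.take w.length = w := List.take_length
    rw [hvt, hwt, ← hflat] at hPeq
    have := congrArg List.length hPeq
    simp at this
    exact this
  subst hPnil
  rw [chainL_nil, List.append_nil] at hsubl
  exact ⟨us, us', ε, hlen, hlen', hblocks, hsubl⟩

private lemma flatten_filterMap_eq {A B : Type*} (σ : A → Option B) :
    ∀ (w : List A) (us : List (List (Option B))) (hlen : us.length = w.length),
      (∀ i, (hi : i < w.length) →
        (us[i]'(by omega)).filterMap id = (σ (w[i]'hi)).toList) →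
      us.flatten.filterMap id = w.filterMap σ := by
  intro w
  induction w with
  | nil => intro us h _; rw [List.eq_nil_of_length_eq_zero h]; rfl
  | cons a w ih =>
    intro us h hb
    cases us with
    | nil => simp at h
    | cons u us =>
      have h0 := hb 0 (by simp)
      simp only [List.getElem_cons_zero] at h0
      have hrest := ih us (by simpa using h) (fun i hi => by
        have := hb (i + 1) (by simpa using Nat.succ_lt_succ hi)
        simpa using this)
      have hcons : List.filterMap σ (a :: w) = (σ a).toList ++ List.filterMap σ w := by
        cases hσ : σ a <;> simp [List.filterMap_cons, hσ]
      rw [List.flatten_cons, List.filterMap_append, h0, hrest, hcons]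

/-- Reduction from strict codirect solutions to the intersection of a regular
relation with the subsequence relation. -/
theorem strict_codirect_to_regular_subseq {A B Q : Type*}
    (σ σ' : A → Option B) (M : NFA A Q)
    (R : Set (List (Option B) × List (Option B)))
    (hR : R = {p : List (Option B) × List (Option B) |
      ∃ w ∈ M.accepts, ∃ us us' : List (List (Option B)),
        ∃ hus : us.length = w.length, ∃ hus' : us'.length = w.length, ∃ r : ℕ,
          (∀ i, ∀ hi : i < w.length,
            (us.get ⟨i, by omega⟩).filterMap id = (σ (w.get ⟨i, hi⟩)).toList ∧
            (us'.get ⟨i, by omega⟩).filterMap id = (σ' (w.get ⟨i, hi⟩)).toList ∧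
            (us.get ⟨i, by omega⟩).length = (us'.get ⟨i, by omega⟩).length) ∧
          p.1 = us.flatten ∧
          p.2 = us'.flatten ++ List.replicate r (none : Option B)}) :
    -- (a)
    (∀ u v : List (Option B), (u, v) ∈ R → u.Sublist v →
      ∃ w ∈ M.accepts, (w.filterMap σ).Sublist (w.filterMap σ')) ∧
    -- (b)
    ((∃ w ∈ M.accepts, ∃ vs : List (List B), AlphStrictCodirectWitness σ σ' w vs) →
      ∃ u v : List (Option B), (u, v) ∈ R ∧ u.Sublist v) := by
  constructor
  · -- (a)
    intro u v huv husub
    rw [hR] at huv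
    obtain ⟨w, hw, us, us', hus, hus', r, hblk, hu, hv⟩ := huv
    simp only at hu hv
    refine ⟨w, hw, ?_⟩
    have h1 : u.filterMap id = w.filterMap σ := by
      rw [hu]
      exact flatten_filterMap_eq σ w us hus (fun i hi => by
        have := (hblk i hi).1
        simpa [List.get_eq_getElem] using this)
    have h2 : v.filterMap id = w.filterMap σ' := by
      rw [hv, List.filterMap_append, filterMap_id_replicate_none, List.append_nil]
      exact flatten_filterMap_eq σ' w us' hus' (fun i hi => by
        have := (hblk i hi).2.1
        simpa [List.get_eq_getElem] using this)
    have h3 := husub.filterMap id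
    rwa [h1, h2] at h3
  · -- (b)
    rintro ⟨w, hw, vs, hwit⟩
    obtain ⟨us, us', r, hlen, hlen', hblocks, hsubl⟩ := key_construction σ σ' w vs hwit
    refine ⟨us.flatten, us'.flatten ++ List.replicate r none, ?_, hsubl⟩
    rw [hR]
    refine ⟨w, hw, us, us', hlen, hlen', r, ?_, rfl, rfl⟩
    intro i hi
    have := hblocks i (by omega) (by omega) hi
    simpa [List.get_eq_getElem] using this
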